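/- Let G be a group, m ≥ 1, and let g ∈ G^m be an m-tuple generating G (Subgroup.closure (Set.range g) = ⊤). Then for every h ∈ G the conjugate tuple (h g_1 h^{-1}, ..., h g_m h^{-1}) is Nielsen-equivalent in G to (g_1,...,g_m). -/

import Mathlib

/-- An elementary Nielsen move on an `m`-tuple of elements of a group `G`:
replace some `gᵢ` by `gᵢ⁻¹`, or interchange `gᵢ` and `gⱼ` for some `i ≠ j`,
or replace `gᵢ` by `gᵢ * gⱼ` for some `i ≠ j`. -/
def NielsenMove {G : Type*} [Group G] {m : ℕ} (τ τ' : Fin m → G) : Prop :=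
  (∃ i, τ' = Function.update τ i (τ i)⁻¹) ∨
  (∃ i j, i ≠ j ∧ τ' = τ ∘ Equiv.swap i j) ∨
  (∃ i j, i ≠ j ∧ τ' = Function.update τ i (τ i * τ j))

/-- Two `m`-tuples are Nielsen-equivalent in `G` if one is obtained from the
other by a finite chain of elementary Nielsen moves. -/
def NielsenEquiv {G : Type*} [Group G] {m : ℕ} (τ τ' : Fin m → G) : Prop :=
  Relation.ReflTransGen NielsenMove τ τ'

section Aux
variable {G : Type*} [Group G] {m : ℕ}

lemma nmove_inv (τ : Fin m → G) (i : Fin m) :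
    NielsenMove τ (Function.update τ i (τ i)⁻¹) := Or.inl ⟨i, rfl⟩

lemma nmove_mul (τ : Fin m → G) {i j : Fin m} (hij : i ≠ j) :
    NielsenMove τ (Function.update τ i (τ i * τ j)) := Or.inr (Or.inr ⟨i, j, hij, rfl⟩)

lemma nequiv_move_symm {τ τ' : Fin m → G} (hmv : NielsenMove τ τ') :
    NielsenEquiv τ' τ := by
  rcases hmv with ⟨i, rfl⟩ | ⟨i, j, hij, rfl⟩ | ⟨i, j, hij, rfl⟩
  · refine Relation.ReflTransGen.single (Or.inl ⟨i, ?_⟩)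
    funext k
    by_cases hk : k = i <;> simp [Function.update_apply, hk]
  · refine Relation.ReflTransGen.single (Or.inr (Or.inl ⟨i, j, hij, ?_⟩))
    funext k
    simp [Function.comp, Equiv.swap_apply_self]
  · -- invert j, mul i j, invert j
    set σ := Function.update τ i (τ i * τ j) with hσ
    have hσj : σ j = τ j := Function.update_of_ne (Ne.symm hij) _ _
    have hσi : σ i = τ i * τ j := Function.update_self _ _ _
    refine Relation.ReflTransGen.head (nmove_inv σ j) ?_
    set σ1 := Function.update σ j (σ j)⁻¹ with hσ1
    refine Relation.ReflTransGen.head (nmove_mul σ1 hij) ?_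
    set σ2 := Function.update σ1 i (σ1 i * σ1 j) with hσ2
    refine Relation.ReflTransGen.head (nmove_inv σ2 j) ?_
    have : Function.update σ2 j (σ2 j)⁻¹ = τ := by
      funext k
      by_cases hkj : k = j
      · subst hkj
        simp [hσ2, hσ1, hσ, Function.update_apply, hij, Ne.symm hij]
      · by_cases hki : k = i
        · subst hki
          simp [hσ2, hσ1, hσ, Function.update_apply, hij, Ne.symm hij, hkj]
        · simp [hσ2, hσ1, hσ, Function.update_apply, hki, hkj]
    rw [this]
    

lemma nequiv_symm {τ τ' : Fin m → G} (h : NielsenEquiv τ τ') : NielsenEquiv τ' τ := by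
  induction h with
  | refl => exact Relation.ReflTransGen.refl
  | tail hstep hmv ih => exact Relation.ReflTransGen.trans (nequiv_move_symm hmv) ih

lemma nequiv_map (φ : G →* G) {τ τ' : Fin m → G} (h : NielsenEquiv τ τ') :
    NielsenEquiv (φ ∘ τ) (φ ∘ τ') := by
  induction h with
  | refl => exact Relation.ReflTransGen.refl
  | tail _ hmv ih =>
    refine Relation.ReflTransGen.tail ih ?_
    rcases hmv with ⟨i, rfl⟩ | ⟨i, j, hij, rfl⟩ | ⟨i, j, hij, rfl⟩
    · refine Or.inl ⟨i, ?_⟩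
      funext k
      by_cases hk : k = i <;> simp [Function.update_apply, hk]
    · exact Or.inr (Or.inl ⟨i, j, hij, rfl⟩)
    · refine Or.inr (Or.inr ⟨i, j, hij, ?_⟩)
      funext k
      by_cases hk : k = i <;> simp [Function.update_apply, hk]

/-- conjugating entry `i` by entry `j` is achievable by Nielsen moves -/
lemma nequiv_conj_step (τ : Fin m → G) {i j : Fin m} (hij : i ≠ j) :
    NielsenEquiv τ (Function.update τ i (τ j * τ i * (τ j)⁻¹)) := by
  set a := τ i; set h := τ j
  refine Relation.ReflTransGen.head (nmove_inv τ j) ?_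
  set σ1 := Function.update τ j (τ j)⁻¹ with hσ1
  refine Relation.ReflTransGen.head (nmove_inv σ1 i) ?_
  set σ2 := Function.update σ1 i (σ1 i)⁻¹ with hσ2
  refine Relation.ReflTransGen.head (nmove_mul σ2 hij) ?_
  set σ3 := Function.update σ2 i (σ2 i * σ2 j) with hσ3
  refine Relation.ReflTransGen.head (nmove_inv σ3 i) ?_
  set σ4 := Function.update σ3 i (σ3 i)⁻¹ with hσ4
  refine Relation.ReflTransGen.head (nmove_mul σ4 hij) ?_
  set σ5 := Function.update σ4 i (σ4 i * σ4 j) with hσ5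
  refine Relation.ReflTransGen.head (nmove_inv σ5 j) ?_
  have : Function.update σ5 j (σ5 j)⁻¹ = Function.update τ i (τ j * τ i * (τ j)⁻¹) := by
    funext k
    by_cases hkj : k = j
    · subst hkj
      simp [hσ5, hσ4, hσ3, hσ2, hσ1, Function.update_apply, hij, Ne.symm hij]
    · by_cases hki : k = i
      · subst hki
        simp [hσ5, hσ4, hσ3, hσ2, hσ1, Function.update_apply, hij, Ne.symm hij, hkj,
          mul_assoc]
      · simp [hσ5, hσ4, hσ3, hσ2, hσ1, Function.update_apply, hki, hkj]
  rw [this]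

lemma nequiv_conj_gen (g : Fin m → G) (j : Fin m) (s : Finset (Fin m)) (hj : j ∉ s) :
    NielsenEquiv (fun i => if i ∈ s then g j * g i * (g j)⁻¹ else g i) g := by
  induction s using Finset.induction_on with
  | empty => simp; exact Relation.ReflTransGen.refl
  | @insert i s hi ih =>
    have hj' : j ∉ s := fun hjs => hj (Finset.mem_insert_of_mem hjs)
    have hij : i ≠ j := fun e => hj (e ▸ Finset.mem_insert_self i s)
    set σ : Fin m → G := fun k => if k ∈ s then g j * g k * (g j)⁻¹ else g k with hσdef
    have hσj : σ j = g j := by simp [hσdef, hj']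
    have hσi : σ i = g i := by simp [hσdef, hi]
    have key : (fun k => if k ∈ insert i s then g j * g k * (g j)⁻¹ else g k)
        = Function.update σ i (σ j * σ i * (σ j)⁻¹) := by
      funext k
      by_cases hki : k = i
      · subst hki; simp [Function.update_self, hσj, hσi, hσdef, hi]
      · simp [Function.update_apply, hki, hσdef, Finset.mem_insert, hki]
    rw [key]
    exact Relation.ReflTransGen.trans (nequiv_symm (nequiv_conj_step σ hij)) (ih hj')

end Aux

/-- For a generating `m`-tuple `g` of `G`, any conjugate tuple is
Nielsen-equivalent to `g` in `G`. -/
theorem conj_tuple_nielsenEquiv {G : Type*} [Group G] {m : ℕ} (hm : 1 ≤ m)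
    (g : Fin m → G) (hg : Subgroup.closure (Set.range g) = ⊤) (h : G) :
    NielsenEquiv (fun i => h * g i * h⁻¹) g := by
  have hmem : h ∈ Subgroup.closure (Set.range g) := hg ▸ Subgroup.mem_top h
  induction hmem using Subgroup.closure_induction with
  | mem x hx =>
    obtain ⟨j, rfl⟩ := hx
    have := nequiv_conj_gen g j (Finset.univ.erase j) (by simp)
    have e : (fun i => g j * g i * (g j)⁻¹)
        = (fun i => if i ∈ Finset.univ.erase j then g j * g i * (g j)⁻¹ else g i) := by
      funext k
      by_cases hk : k = j
      · subst hk; simp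
      · simp [hk]
    rw [e]; exact this
  | one => simp only [one_mul, mul_one, inv_one]; exact Relation.ReflTransGen.refl
  | mul a b _ _ ha hb =>
    have := nequiv_map (MulAut.conj a).toMonoidHom hb
    have e1 : ((MulAut.conj a).toMonoidHom ∘ fun i => b * g i * b⁻¹)
        = (fun i => (a * b) * g i * (a * b)⁻¹) := by
      funext k; simp [MulAut.conj, mul_assoc]
    have e2 : ((MulAut.conj a).toMonoidHom ∘ g) = (fun i => a * g i * a⁻¹) := by
      funext k; simp [MulAut.conj]
    rw [e1, e2] at this
    exact Relation.ReflTransGen.trans this ha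
  | inv a _ ha =>
    have := nequiv_map (MulAut.conj a⁻¹).toMonoidHom ha
    have e1 : ((MulAut.conj a⁻¹).toMonoidHom ∘ fun i => a * g i * a⁻¹) = g := by
      funext k; simp [MulAut.conj, mul_assoc]
    have e2 : ((MulAut.conj a⁻¹).toMonoidHom ∘ g) = (fun i => a⁻¹ * g i * a⁻¹⁻¹) := by
      funext k; simp [MulAut.conj]
    rw [e1, e2] at this
    exact nequiv_symm this
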